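/- Let G be a connected graph of order m and let n be a positive integer. Then N_L(G×P_n) = n·N(G) + Σ_{k=2}^{n} (n−k+1)·(1^T · A^{k−1} · 1), where A is the transfer matrix of G and 1 is the all-ones column vector of length 2^m−1. -/

import Mathlib

open SimpleGraph Finset
open scoped Classical

/-- A connected set of a graph: a nonempty vertex subset inducing a connected subgraph. -/
def IsConnSet {V : Type*} (G : SimpleGraph V) (C : Finset V) : Prop :=
  C.Nonempty ∧ (G.induce (C : Set V)).Connected

/-- `N(G)`: the number of connected sets of `G`. -/
noncomputable def numConnSets {V : Type*} (G : SimpleGraph V) : ℕ :=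
  {C : Finset V | IsConnSet G C}.ncard

/-- Membership in `C_L(G×P_n)`: a connected set `C` of `G×P_n` such that for any two
consecutive columns `X, Y` with `C∩X ≠ ∅` and `C∩Y ≠ ∅`, the set `C∩(X∪Y)` is a connected
set of `G×P_n`. -/
def IsCLSet {V : Type*} (G : SimpleGraph V) (n : ℕ) (C : Finset (V × Fin n)) : Prop :=
  IsConnSet (G □ pathGraph n) C ∧
  ∀ j j' : Fin n, (pathGraph n).Adj j j' →
    (C.filter (fun p => p.2 = j)).Nonempty →
    (C.filter (fun p => p.2 = j')).Nonempty →
    IsConnSet (G □ pathGraph n) (C.filter (fun p => p.2 = j ∨ p.2 = j'))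

/-- `N_L(G×P_n) = |C_L(G×P_n)|`. -/
noncomputable def NL {V : Type*} (G : SimpleGraph V) (n : ℕ) : ℕ :=
  {C : Finset (V × Fin n) | IsCLSet G n C}.ncard

lemma induce_connected_congr {V W : Type*} {G : SimpleGraph V} {H : SimpleGraph W}
    {f : V → W} {s : Set V} (hf : Set.InjOn f s)
    (h : ∀ a ∈ s, ∀ b ∈ s, G.Adj a b ↔ H.Adj (f a) (f b)) :
    (G.induce s).Connected ↔ (H.induce (f '' s)).Connected := by
  refine SimpleGraph.Iso.connected_iff ⟨(Equiv.Set.imageOfInjOn f s hf), ?_⟩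
  rintro ⟨a, ha⟩ ⟨b, hb⟩
  exact (h a ha b hb).symm

section
variable {m n : ℕ} (G : SimpleGraph (Fin m))

def col (C : Finset (Fin m × Fin n)) (j : Fin n) : Finset (Fin m) :=
  univ.filter (fun v => (v, j) ∈ C)

lemma mem_col {C : Finset (Fin m × Fin n)} {j : Fin n} {v : Fin m} :
    v ∈ col C j ↔ (v, j) ∈ C := by simp [col]

def emb2 (S T : Finset (Fin m)) : Finset (Fin m × Fin 2) :=
  S.image (fun p => (p, (0 : Fin 2))) ∪ T.image (fun q => (q, (1 : Fin 2)))

def pairConn (S T : Finset (Fin m)) : Prop := IsConnSet (G □ pathGraph 2) (emb2 S T)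

lemma path2_adj01 : (pathGraph 2).Adj 0 1 := by
  rw [pathGraph_adj]; decide

lemma two_col (C : Finset (Fin m × Fin n)) (j j' : Fin n) (h : j.val + 1 = j'.val) :
    IsConnSet (G □ pathGraph n) (C.filter (fun p => p.2 = j ∨ p.2 = j')) ↔
      pairConn G (col C j) (col C j') := by
  have hjj' : j ≠ j' := by
    intro e; rw [e] at h; omega
  have hpn : (pathGraph n).Adj j j' := pathGraph_adj.mpr (Or.inl h)
  have himg : (fun p : Fin m × Fin n => (p.1, if p.2 = j then (0:Fin 2) else 1)) ''
      ↑(C.filter (fun p => p.2 = j ∨ p.2 = j')) = ↑(emb2 (col C j) (col C j')) := by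
    ext ⟨v, c⟩
    simp only [Set.mem_image, Finset.coe_filter, Set.mem_setOf_eq, emb2, Finset.coe_union,
      Set.mem_union, Finset.coe_image, Finset.mem_coe, mem_col, Set.mem_image,
      Finset.mem_coe, mem_col, Prod.mk.injEq]
    constructor
    · rintro ⟨⟨w, d⟩, ⟨hw, rfl | rfl⟩, h1, h2⟩
      · exact Or.inl ⟨w, hw, h1, by simpa using h2⟩
      · refine Or.inr ⟨w, hw, h1, ?_⟩
        rw [if_neg hjj'.symm] at h2; exact h2
    · rintro (⟨w, hw, h1, h2⟩ | ⟨w, hw, h1, h2⟩)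
      · exact ⟨(w, j), ⟨hw, Or.inl rfl⟩, h1, by simpa using h2⟩
      · exact ⟨(w, j'), ⟨hw, Or.inr rfl⟩, h1, by rw [if_neg hjj'.symm]; exact h2⟩
  have hinj : Set.InjOn (fun p : Fin m × Fin n => (p.1, if p.2 = j then (0:Fin 2) else 1))
      ↑(C.filter (fun p => p.2 = j ∨ p.2 = j')) := by
    rintro ⟨v, c⟩ hv ⟨w, d⟩ hw he
    simp only [Finset.coe_filter, Set.mem_setOf_eq] at hv hw
    simp only [Prod.mk.injEq] at he
    obtain ⟨h1, h2⟩ := he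
    subst h1
    rcases hv.2 with rfl | rfl <;> rcases hw.2 with rfl | rfl
    · rfl
    · rw [if_pos rfl, if_neg hjj'.symm] at h2; exact absurd h2 (by decide)
    · rw [if_pos rfl, if_neg hjj'.symm] at h2; exact absurd h2.symm (by decide)
    · rfl
  have hadj : ∀ a ∈ (↑(C.filter (fun p => p.2 = j ∨ p.2 = j')) : Set (Fin m × Fin n)),
      ∀ b ∈ (↑(C.filter (fun p => p.2 = j ∨ p.2 = j')) : Set (Fin m × Fin n)),
      (G □ pathGraph n).Adj a b ↔
        (G □ pathGraph 2).Adj (a.1, if a.2 = j then (0:Fin 2) else 1)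
          (b.1, if b.2 = j then (0:Fin 2) else 1) := by
    rintro ⟨v, c⟩ hv ⟨w, d⟩ hw
    simp only [Finset.coe_filter, Set.mem_setOf_eq] at hv hw
    simp only [boxProd_adj]
    rcases hv.2 with rfl | rfl <;> rcases hw.2 with rfl | rfl
    · simp
    · rw [if_pos rfl, if_neg hjj'.symm]
      simp [hpn, path2_adj01, hjj', (by decide : (0:Fin 2) ≠ 1)]
    · rw [if_pos rfl, if_neg hjj'.symm]
      simp [hpn.symm, path2_adj01.symm, hjj'.symm, (by decide : (1:Fin 2) ≠ 0)]
    · simp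
  have hconn : ((G □ pathGraph n).induce ↑(C.filter (fun p => p.2 = j ∨ p.2 = j'))).Connected ↔
      ((G □ pathGraph 2).induce ↑(emb2 (col C j) (col C j'))).Connected := by
    rw [induce_connected_congr hinj hadj, himg]
  have hne : (C.filter (fun p => p.2 = j ∨ p.2 = j')).Nonempty ↔
      (emb2 (col C j) (col C j')).Nonempty := by
    rw [← Finset.coe_nonempty, ← Finset.coe_nonempty, ← himg, Set.image_nonempty]
  unfold pairConn IsConnSet
  rw [hconn, hne]

lemma one_col (S : Finset (Fin m)) (a : Fin n) :
    IsConnSet (G □ pathGraph n) (S.image (fun v => (v, a))) ↔ IsConnSet G S := by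
  unfold IsConnSet
  have himg : (fun v : Fin m => (v, a)) '' ↑S = ↑(S.image (fun v => (v, a))) := by
    rw [Finset.coe_image]
  have hinj : Set.InjOn (fun v : Fin m => (v, a)) ↑S := by
    intro x _ y _ he; simpa using he
  have hadj : ∀ x ∈ (↑S : Set (Fin m)), ∀ y ∈ (↑S : Set (Fin m)),
      G.Adj x y ↔ (G □ pathGraph n).Adj (x, a) (y, a) := by
    intro x _ y _
    simp [boxProd_adj]
  rw [Finset.image_nonempty, ← himg, ← induce_connected_congr hinj hadj]

lemma walk_cols {C : Set (Fin m × Fin n)} {x y : C}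
    (w : ((G □ pathGraph n).induce C).Walk x y) :
    ∀ t : Fin n, (x : Fin m × Fin n).2.val ≤ t.val → t.val ≤ (y : Fin m × Fin n).2.val →
      ∃ v : Fin m, (v, t) ∈ C := by
  induction w with
  | @nil u =>
    intro t h1 h2
    have : t = (u : Fin m × Fin n).2 := Fin.ext (by omega)
    subst this
    exact ⟨(u : Fin m × Fin n).1, by simpa using u.2⟩
  | @cons a b c hab w ih =>
    intro t h1 h2
    rcases eq_or_lt_of_le h1 with he | hlt
    · have : t = (a : Fin m × Fin n).2 := Fin.ext (by omega)
      subst this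
      exact ⟨(a : Fin m × Fin n).1, by simpa using a.2⟩
    · have hadj : (G □ pathGraph n).Adj a.1 b.1 := hab
      rw [boxProd_adj] at hadj
      have hb : (b : Fin m × Fin n).2.val ≤ (a : Fin m × Fin n).2.val + 1 := by
        rcases hadj with ⟨-, h⟩ | ⟨hpa, -⟩
        · rw [← h]; omega
        · rw [pathGraph_adj] at hpa; omega
      exact ih t (by omega) h2

lemma conn_interval {C : Finset (Fin m × Fin n)} (hC : IsConnSet (G □ pathGraph n) C)
    {p q : Fin m × Fin n} (hp : p ∈ C) (hq : q ∈ C) (t : Fin n)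
    (h1 : p.2.val ≤ t.val) (h2 : t.val ≤ q.2.val) : ∃ v, (v, t) ∈ C := by
  obtain ⟨w⟩ := hC.2.preconnected ⟨p, hp⟩ ⟨q, hq⟩
  have := walk_cols G w t h1 h2
  simpa using this

lemma filter_col_nonempty {C : Finset (Fin m × Fin n)} {j : Fin n} :
    (C.filter (fun p => p.2 = j)).Nonempty ↔ (col C j).Nonempty := by
  constructor
  · rintro ⟨⟨v, c⟩, hp⟩
    simp only [mem_filter] at hp
    exact ⟨v, mem_col.mpr (hp.2 ▸ hp.1)⟩
  · rintro ⟨v, hv⟩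
    exact ⟨(v, j), mem_filter.mpr ⟨mem_col.mp hv, rfl⟩⟩

lemma single_col_eq {C : Finset (Fin m × Fin n)} {a : Fin n} (h : ∀ p ∈ C, p.2 = a) :
    C = (col C a).image (fun v => (v, a)) := by
  ext ⟨v, j⟩
  simp only [mem_image, mem_col, Prod.mk.injEq]
  constructor
  · intro hv
    have := h _ hv
    simp only at this
    subst this
    exact ⟨v, hv, rfl, rfl⟩
  · rintro ⟨w, hw, rfl, rfl⟩
    exact hw

theorem isCLSet_iff (C : Finset (Fin m × Fin n)) :
    IsCLSet G n C ↔ ∃ a b : Fin n, a.val ≤ b.val ∧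
      (∀ j : Fin n, (col C j).Nonempty ↔ (a.val ≤ j.val ∧ j.val ≤ b.val)) ∧
      (a = b → IsConnSet G (col C a)) ∧
      (∀ j j' : Fin n, j.val + 1 = j'.val → a.val ≤ j.val → j'.val ≤ b.val →
        pairConn G (col C j) (col C j')) := by
  constructor
  · rintro ⟨hconn, hCL⟩
    have hCne : C.Nonempty := hconn.1
    have hJne : (C.image Prod.snd).Nonempty := hCne.image _
    set a := (C.image Prod.snd).min' hJne with ha
    set b := (C.image Prod.snd).max' hJne with hb
    obtain ⟨pa, hpa, hpa2⟩ := mem_image.mp ((C.image Prod.snd).min'_mem hJne)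
    obtain ⟨pb, hpb, hpb2⟩ := mem_image.mp ((C.image Prod.snd).max'_mem hJne)
    have hpat : ∀ j : Fin n, (col C j).Nonempty ↔ (a.val ≤ j.val ∧ j.val ≤ b.val) := by
      intro j
      constructor
      · rintro ⟨v, hv⟩
        have hj : j ∈ C.image Prod.snd := mem_image.mpr ⟨(v, j), mem_col.mp hv, rfl⟩
        exact ⟨Finset.min'_le _ _ hj, Finset.le_max' _ _ hj⟩
      · rintro ⟨h1, h2⟩
        obtain ⟨v, hv⟩ := conn_interval G hconn hpa hpb j (by rw [hpa2]; exact h1)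
          (by rw [hpb2]; exact h2)
        exact ⟨v, mem_col.mpr hv⟩
    refine ⟨a, b, Finset.min'_le _ _ ((C.image Prod.snd).max'_mem hJne), hpat, ?_, ?_⟩
    · intro hab
      have hcols : ∀ p ∈ C, p.2 = a := by
        intro p hp
        have : p.2 ∈ C.image Prod.snd := mem_image.mpr ⟨p, hp, rfl⟩
        have h1 := Finset.min'_le _ _ this
        have h2 := Finset.le_max' _ _ this
        exact le_antisymm (by rw [hab, hb]; exact h2) (by rw [ha]; exact h1)
      have hCeq := single_col_eq hcols
      rw [hCeq] at hconn
      exact (one_col G _ _).mp hconn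
    · intro j j' hjj' h1 h2
      have hadj : (pathGraph n).Adj j j' := pathGraph_adj.mpr (Or.inl hjj')
      have hne1 : (C.filter (fun p => p.2 = j)).Nonempty :=
        filter_col_nonempty.mpr ((hpat j).mpr ⟨h1, by omega⟩)
      have hne2 : (C.filter (fun p => p.2 = j')).Nonempty :=
        filter_col_nonempty.mpr ((hpat j').mpr ⟨by omega, h2⟩)
      exact (two_col G C j j' hjj').mp (hCL j j' hadj hne1 hne2)
  · rintro ⟨a, b, hab, hpat, hsing, hpair⟩
    have hsupp : ∀ p ∈ C, a.val ≤ p.2.val ∧ p.2.val ≤ b.val := by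
      rintro ⟨v, j⟩ hp
      exact (hpat j).mp ⟨v, mem_col.mpr hp⟩
    have hCne : C.Nonempty := by
      obtain ⟨v, hv⟩ := (hpat a).mpr ⟨le_refl _, hab⟩
      exact ⟨(v, a), mem_col.mp hv⟩
    -- connectivity of ranges of columns
    have hrange : ∀ d : ℕ, a.val + 1 + d ≤ b.val →
        ((G □ pathGraph n).induce
          ↑(C.filter (fun p => a.val ≤ p.2.val ∧ p.2.val ≤ a.val + 1 + d))).Connected := by
      intro d
      induction d with
      | zero =>
        intro hd
        have hj' : a.val + 1 < n := lt_of_le_of_lt hd b.isLt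
        set j' : Fin n := ⟨a.val + 1, hj'⟩ with hj'def
        have hfe : C.filter (fun p => a.val ≤ p.2.val ∧ p.2.val ≤ a.val + 1 + 0) =
            C.filter (fun p => p.2 = a ∨ p.2 = j') := by
          apply Finset.filter_congr
          intro p _
          simp only [Fin.ext_iff, hj'def]
          constructor
          · intro h; omega
          · intro h
            rcases h with h | h <;> omega
        rw [hfe]
        exact ((two_col G C a j' rfl).mpr (hpair a j' rfl (le_refl _) hd)).2
      | succ d ih =>
        intro hd
        have hcol1 : a.val + 1 + d < n := by have := b.isLt; omega
        have hcol2 : a.val + 2 + d < n := by have := b.isLt; omega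
        set j : Fin n := ⟨a.val + 1 + d, hcol1⟩ with hjdef
        set j' : Fin n := ⟨a.val + 2 + d, hcol2⟩ with hj'def
        have hpc : IsConnSet (G □ pathGraph n) (C.filter (fun p => p.2 = j ∨ p.2 = j')) :=
          (two_col G C j j' (by simp [hjdef, hj'def]; omega)).mpr
            (hpair j j' (by simp [hjdef, hj'def]; omega) (by simp [hjdef]; omega)
              (by simp [hj'def]; omega))
        have hsets : (↑(C.filter (fun p => a.val ≤ p.2.val ∧ p.2.val ≤ a.val + 1 + d))
              ∪ ↑(C.filter (fun p => p.2 = j ∨ p.2 = j')) : Set (Fin m × Fin n)) =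
            ↑(C.filter (fun p => a.val ≤ p.2.val ∧ p.2.val ≤ a.val + 1 + (d + 1))) := by
          ext ⟨v, c⟩
          simp only [Set.mem_union, Finset.coe_filter, Set.mem_setOf_eq, Fin.ext_iff,
            hjdef, hj'def]
          constructor
          · rintro (⟨hc, h⟩ | ⟨hc, h⟩)
            · exact ⟨hc, by omega⟩
            · refine ⟨hc, ?_⟩
              rcases h with h | h <;> [skip; skip] <;> omega
          · rintro ⟨hc, h1, h2⟩
            rcases Nat.lt_or_ge c.val (a.val + 2 + d) with h | h
            · exact Or.inl ⟨hc, h1, by omega⟩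
            · exact Or.inr ⟨hc, Or.inr (by omega)⟩
        have hint : ((↑(C.filter (fun p => a.val ≤ p.2.val ∧ p.2.val ≤ a.val + 1 + d)) :
              Set (Fin m × Fin n)) ∩
              ↑(C.filter (fun p => p.2 = j ∨ p.2 = j'))).Nonempty := by
          have hjv : j.val = a.val + 1 + d := rfl
          obtain ⟨v, hv⟩ := (hpat j).mpr ⟨by omega, by omega⟩
          refine ⟨(v, j), ?_, ?_⟩
          · simp only [Finset.coe_filter, Set.mem_setOf_eq]
            exact ⟨mem_col.mp hv, by omega, by omega⟩
          · simp only [Finset.coe_filter, Set.mem_setOf_eq]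
            exact ⟨mem_col.mp hv, by simp⟩
        have := SimpleGraph.induce_union_connected (ih (by omega)).preconnected hpc.2.preconnected hint
        rwa [hsets] at this
    have hCconn : IsConnSet (G □ pathGraph n) C := by
      refine ⟨hCne, ?_⟩
      rcases Nat.eq_or_lt_of_le hab with he | hlt
      · have hab' : a = b := Fin.ext he
        have hcols : ∀ p ∈ C, p.2 = a := by
          intro p hp
          have := hsupp p hp
          exact Fin.ext (by omega)
        have hCeq := single_col_eq hcols
        rw [hCeq]
        exact ((one_col G _ _).mpr (hsing hab')).2
      · have hfC : C.filter (fun p => a.val ≤ p.2.val ∧ p.2.val ≤ a.val + 1 + (b.val - a.val - 1)) = C := by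
          apply Finset.filter_true_of_mem
          intro p hp
          have := hsupp p hp
          omega
        have := hrange (b.val - a.val - 1) (by omega)
        rwa [hfC] at this
    refine ⟨hCconn, ?_⟩
    intro j j' hadj hne1 hne2
    have hj := (hpat j).mp (filter_col_nonempty.mp hne1)
    have hj' := (hpat j').mp (filter_col_nonempty.mp hne2)
    rcases pathGraph_adj.mp hadj with h | h
    · exact (two_col G C j j' h).mpr (hpair j j' h hj.1 hj'.2)
    · have hswap : C.filter (fun p => p.2 = j ∨ p.2 = j') =
          C.filter (fun p => p.2 = j' ∨ p.2 = j) := by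
        apply Finset.filter_congr
        intro p _
        exact or_comm
      rw [hswap]
      exact (two_col G C j' j h).mpr (hpair j' j h hj'.1 hj.2)

end

section
variable {ι X : Type*} [Fintype ι] [DecidableEq ι] [Fintype X]

noncomputable def seqSet (R : X → X → Prop) (l : ℕ) : Finset (Fin (l + 1) → X) :=
  univ.filter (fun S => ∀ t : Fin l, R (S t.castSucc) (S t.succ))

lemma tm_count (φ : ι ≃ X) (R : X → X → Prop)
    (A : Matrix ι ι ℕ) (hA : ∀ i j, A i j = if R (φ i) (φ j) then 1 else 0) :
    ∀ l : ℕ, ∀ j : ι, (∑ i, (A ^ l) i j) =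
      ((seqSet R l).filter (fun S => S (Fin.last l) = φ j)).card := by
  intro l
  induction l with
  | zero =>
    intro j
    have h1 : ∑ i, (A ^ 0) i j = 1 := by
      simp [Matrix.one_apply]
    rw [h1, eq_comm, Finset.card_eq_one]
    refine ⟨fun _ => φ j, ?_⟩
    ext S
    simp only [seqSet, Finset.mem_filter, Finset.mem_univ, true_and, Finset.mem_singleton]
    constructor
    · rintro ⟨-, hS⟩
      funext t
      have ht : t = Fin.last 0 := by
        ext; omega
      rw [ht]
      exact hS
    · rintro rfl
      exact ⟨fun t => t.elim0, rfl⟩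
  | succ l ih =>
    intro j
    have hL : ∑ i, (A ^ (l + 1)) i j = ∑ p, (∑ i, (A ^ l) i p) * A p j := by
      simp only [pow_succ, Matrix.mul_apply, Finset.sum_mul]
      exact Finset.sum_comm
    rw [hL]
    have hR : ((seqSet R (l+1)).filter (fun S => S (Fin.last (l+1)) = φ j)).card =
        ∑ p : ι, (((seqSet R (l+1)).filter (fun S => S (Fin.last (l+1)) = φ j)).filter
          (fun S => S (Fin.last l).castSucc = φ p)).card := by
      rw [Finset.card_eq_sum_card_fiberwise
        (f := fun S => φ.symm (S (Fin.last l).castSucc)) (t := univ) (fun _ _ => mem_univ _)]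
      refine Finset.sum_congr rfl (fun p _ => ?_)
      congr 1
      apply Finset.filter_congr
      intro S _
      rw [Equiv.symm_apply_eq]
    rw [hR]
    refine Finset.sum_congr rfl (fun p _ => ?_)
    rw [ih p, hA p j]
    by_cases hRp : R (φ p) (φ j)
    · rw [if_pos hRp, mul_one]
      refine Finset.card_bij (fun S _ => (Fin.snoc S (φ j) : Fin (l+2) → X)) ?_ ?_ ?_
      · intro T hT
        simp only [seqSet, Finset.mem_filter, Finset.mem_univ, true_and] at hT ⊢
        obtain ⟨hcond, hlast⟩ := hT
        refine ⟨⟨?_, ?_⟩, ?_⟩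
        · intro t
          refine Fin.lastCases ?_ ?_ t
          · rw [Fin.succ_last, Fin.snoc_last, Fin.snoc_castSucc, hlast]
            exact hRp
          · intro i
            rw [Fin.succ_castSucc, Fin.snoc_castSucc, Fin.snoc_castSucc]
            exact hcond i
        · rw [Fin.snoc_last]
        · rw [Fin.snoc_castSucc, hlast]
      · intro T1 h1 T2 h2 he
        replace he : (Fin.snoc T1 (φ j) : Fin (l+2) → X) = Fin.snoc T2 (φ j) := he
        have h3 := congrArg Fin.init he
        rwa [Fin.init_snoc, Fin.init_snoc] at h3
      · intro S hS
        simp only [seqSet, Finset.mem_filter, Finset.mem_univ, true_and] at hS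
        obtain ⟨⟨hcond, hlast⟩, hsec⟩ := hS
        refine ⟨Fin.init S, ?_, ?_⟩
        · simp only [seqSet, Finset.mem_filter, Finset.mem_univ, true_and]
          constructor
          · intro t
            have h := hcond t.castSucc
            rw [Fin.succ_castSucc] at h
            simpa [Fin.init] using h
          · simpa [Fin.init] using hsec
        · show (Fin.snoc (Fin.init S) (φ j) : Fin (l+2) → X) = S
          rw [← hlast]
          exact Fin.snoc_init_self S
    · rw [if_neg hRp, mul_zero]
      rw [eq_comm, Finset.card_eq_zero, Finset.filter_eq_empty_iff]
      intro S hS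
      simp only [seqSet, Finset.mem_filter, Finset.mem_univ, true_and] at hS
      obtain ⟨hcond, hlast⟩ := hS
      intro hsec
      apply hRp
      have h := hcond (Fin.last l)
      rw [Fin.succ_last, hlast, hsec] at h
      exact h

lemma tm_total (φ : ι ≃ X) (R : X → X → Prop)
    (A : Matrix ι ι ℕ) (hA : ∀ i j, A i j = if R (φ i) (φ j) then 1 else 0) (l : ℕ) :
    (∑ i, ∑ j, (A ^ l) i j) = (seqSet R l).card := by
  rw [show (∑ i, ∑ j, (A ^ l) i j) = ∑ j, ∑ i, (A ^ l) i j from Finset.sum_comm]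
  rw [Finset.sum_congr rfl (fun j _ => tm_count φ R A hA l j)]
  rw [Finset.card_eq_sum_card_fiberwise (f := fun S => φ.symm (S (Fin.last l)))
    (t := univ) (fun _ _ => mem_univ _)]
  refine Finset.sum_congr rfl (fun p _ => ?_)
  congr 1
  apply Finset.filter_congr
  intro S _
  rw [Equiv.symm_apply_eq]
end

section
variable {m n : ℕ} (G : SimpleGraph (Fin m))

lemma pattern_unique {P : Fin n → Prop} {a₀ b₀ a b : Fin n}
    (h₀ : a₀.val ≤ b₀.val) (hab : a.val ≤ b.val)
    (hp₀ : ∀ j, P j ↔ (a₀.val ≤ j.val ∧ j.val ≤ b₀.val))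
    (hp : ∀ j, P j ↔ (a.val ≤ j.val ∧ j.val ≤ b.val)) : a₀ = a ∧ b₀ = b := by
  have h1 := (hp _).mp ((hp₀ a₀).mpr (by omega))
  have h2 := (hp₀ _).mp ((hp a).mpr (by omega))
  have h3 := (hp _).mp ((hp₀ b₀).mpr (by omega))
  have h4 := (hp₀ _).mp ((hp b).mpr (by omega))
  exact ⟨Fin.ext (by omega), Fin.ext (by omega)⟩

lemma clset_data {C : Finset (Fin m × Fin n)} (hC : IsCLSet G n C) {a b : Fin n}
    (hab : a.val ≤ b.val)
    (hpat : ∀ j, (col C j).Nonempty ↔ (a.val ≤ j.val ∧ j.val ≤ b.val)) :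
    (a = b → IsConnSet G (col C a)) ∧
    (∀ j j' : Fin n, j.val + 1 = j'.val → a.val ≤ j.val → j'.val ≤ b.val →
      pairConn G (col C j) (col C j')) := by
  obtain ⟨a₀, b₀, h₀, hpat₀, hsing₀, hpair₀⟩ := (isCLSet_iff G C).mp hC
  obtain ⟨rfl, rfl⟩ := pattern_unique h₀ hab hpat₀ hpat
  exact ⟨hsing₀, hpair₀⟩

-- single-column fiber
lemma fiber_single (a : Fin n) :
    (((univ : Finset (Finset (Fin m × Fin n))).filter (IsCLSet G n)).filter
      (fun C => ∀ j : Fin n, (col C j).Nonempty ↔ (a.val ≤ j.val ∧ j.val ≤ a.val))).card =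
    ((univ : Finset (Finset (Fin m))).filter (fun S => IsConnSet G S)).card := by
  refine Finset.card_bij' (fun C _ => col C a) (fun S _ => S.image (fun v => (v, a)))
    ?_ ?_ ?_ ?_
  · -- forward maps into conn sets
    intro C hC
    simp only [mem_filter, mem_univ, true_and] at hC ⊢
    obtain ⟨hCL, hpat⟩ := hC
    exact (clset_data G hCL (le_refl _) hpat).1 rfl
  · -- backward maps into fiber
    intro S hS
    simp only [mem_filter, mem_univ, true_and] at hS ⊢
    have hcol : ∀ j : Fin n, col (S.image (fun v => (v, a))) j = if j = a then S else ∅ := by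
      intro j
      ext v
      simp only [mem_col, mem_image, Prod.mk.injEq]
      by_cases hja : j = a
      · subst hja
        simp only [if_pos rfl]
        constructor
        · rintro ⟨w, hw, rfl, -⟩; exact hw
        · intro hv; exact ⟨v, hv, rfl, trivial⟩
      · rw [if_neg hja]
        simp only [Finset.notMem_empty, iff_false]
        rintro ⟨w, -, -, h⟩
        exact hja h.symm
    have hpat : ∀ j : Fin n, (col (S.image (fun v => (v, a))) j).Nonempty ↔
        (a.val ≤ j.val ∧ j.val ≤ a.val) := by
      intro j
      rw [hcol j]
      by_cases hja : j = a
      · subst hja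
        simp only [if_pos rfl]
        exact ⟨fun _ => ⟨le_refl _, le_refl _⟩, fun _ => hS.1⟩
      · rw [if_neg hja]
        simp only [Finset.not_nonempty_empty, false_iff]
        intro h
        exact hja (Fin.ext (by omega))
    refine ⟨(isCLSet_iff G _).mpr ⟨a, a, le_refl _, hpat, ?_, ?_⟩, hpat⟩
    · intro _
      rw [hcol a, if_pos rfl]
      exact hS
    · intro j j' h h1 h2
      omega
  · -- left inverse
    intro C hC
    simp only [mem_filter, mem_univ, true_and] at hC
    obtain ⟨hCL, hpat⟩ := hC
    have hcols : ∀ p ∈ C, p.2 = a := by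
      rintro ⟨v, j⟩ hp
      have := (hpat j).mp ⟨v, mem_col.mpr hp⟩
      show j = a
      exact Fin.ext (by omega)
    exact (single_col_eq hcols).symm
  · -- right inverse
    intro S hS
    ext v
    simp only [mem_col, mem_image, Prod.mk.injEq]
    constructor
    · rintro ⟨w, hw, rfl, -⟩; exact hw
    · intro hv; exact ⟨v, hv, rfl, trivial⟩

-- decode of a sequence
noncomputable def decodeSeq (a b : Fin n) (S : Fin (b.val - a.val + 1) → {T : Finset (Fin m) // T.Nonempty}) :
    Finset (Fin m × Fin n) :=
  univ.filter (fun p =>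
    if h : a.val ≤ p.2.val ∧ p.2.val ≤ b.val then
      p.1 ∈ (S ⟨p.2.val - a.val, by omega⟩).1 else False)

lemma col_decodeSeq_in {a b : Fin n} (S : Fin (b.val - a.val + 1) → {T : Finset (Fin m) // T.Nonempty})
    (j : Fin n) (h : a.val ≤ j.val ∧ j.val ≤ b.val) :
    col (decodeSeq a b S) j = (S ⟨j.val - a.val, by omega⟩).1 := by
  ext v
  simp only [mem_col, decodeSeq, mem_filter, mem_univ, true_and]
  rw [dif_pos h]

lemma col_decodeSeq_out {a b : Fin n} (S : Fin (b.val - a.val + 1) → {T : Finset (Fin m) // T.Nonempty})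
    (j : Fin n) (h : ¬(a.val ≤ j.val ∧ j.val ≤ b.val)) :
    col (decodeSeq a b S) j = ∅ := by
  ext v
  simp only [mem_col, decodeSeq, mem_filter, mem_univ, true_and, Finset.notMem_empty, iff_false]
  rw [dif_neg h]
  exact id

lemma fiber_multi (a b : Fin n) (hab : a.val < b.val) :
    (((univ : Finset (Finset (Fin m × Fin n))).filter (IsCLSet G n)).filter
      (fun C => ∀ j : Fin n, (col C j).Nonempty ↔ (a.val ≤ j.val ∧ j.val ≤ b.val))).card =
    (seqSet (fun S T : {S : Finset (Fin m) // S.Nonempty} => pairConn G S.1 T.1)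
      (b.val - a.val)).card := by
  have hbn := b.isLt
  refine Finset.card_bij'
    (fun C hC => fun t : Fin (b.val - a.val + 1) =>
      (⟨col C ⟨a.val + t.val, by omega⟩, by
        simp only [mem_filter, mem_univ, true_and] at hC
        exact (hC.2 ⟨a.val + t.val, by omega⟩).mpr ⟨by simp, by simp; omega⟩⟩ :
        {T : Finset (Fin m) // T.Nonempty}))
    (fun S _ => decodeSeq a b S) ?_ ?_ ?_ ?_
  · -- encode lands in seqSet
    intro C hC
    simp only [mem_filter, mem_univ, true_and] at hC
    obtain ⟨hCL, hpat⟩ := hC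
    have hpair := (clset_data G hCL (le_of_lt hab) hpat).2
    simp only [seqSet, mem_filter, mem_univ, true_and]
    intro t
    exact hpair ⟨a.val + t.castSucc.val, by omega⟩ ⟨a.val + t.succ.val, by omega⟩
      (by simp only [Fin.val_succ, Fin.coe_castSucc]; omega) (by simp)
      (by simp only [Fin.val_succ]; omega)
  · -- decode lands in fiber
    intro S hS
    simp only [seqSet, mem_filter, mem_univ, true_and] at hS
    have hpat : ∀ j : Fin n, (col (decodeSeq a b S) j).Nonempty ↔
        (a.val ≤ j.val ∧ j.val ≤ b.val) := by
      intro j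
      by_cases h : a.val ≤ j.val ∧ j.val ≤ b.val
      · rw [col_decodeSeq_in S j h]
        exact ⟨fun _ => h, fun _ => (S _).2⟩
      · rw [col_decodeSeq_out S j h]
        simp only [Finset.not_nonempty_empty, false_iff]
        exact h
    simp only [mem_filter, mem_univ, true_and]
    refine ⟨(isCLSet_iff G _).mpr ⟨a, b, le_of_lt hab, hpat, ?_, ?_⟩, hpat⟩
    · intro h
      exact absurd (congrArg Fin.val h) (by omega)
    · intro j j' hjj' h1 h2
      rw [col_decodeSeq_in S j ⟨h1, by omega⟩, col_decodeSeq_in S j' ⟨by omega, h2⟩]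
      have := hS ⟨j.val - a.val, by omega⟩
      have e1 : (⟨j.val - a.val, by omega⟩ : Fin (b.val - a.val)).castSucc
          = ⟨j.val - a.val, by omega⟩ := by
        ext; simp
      have e2 : (⟨j.val - a.val, by omega⟩ : Fin (b.val - a.val)).succ
          = ⟨j'.val - a.val, by omega⟩ := by
        ext; simp [Fin.val_succ]; omega
      rw [e1, e2] at this
      exact this
  · -- left inverse : decode (encode C) = C
    intro C hC
    simp only [mem_filter, mem_univ, true_and] at hC
    obtain ⟨hCL, hpat⟩ := hC
    ext ⟨v, c⟩
    simp only [decodeSeq, mem_filter, mem_univ, true_and]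
    by_cases h : a.val ≤ c.val ∧ c.val ≤ b.val
    · rw [dif_pos h]
      simp only [mem_col]
      have e : (⟨a.val + (c.val - a.val), by omega⟩ : Fin n) = c := by
        ext; simp; omega
      rw [e]
    · rw [dif_neg h]
      simp only [false_iff]
      intro hvc
      exact h ((hpat c).mp ⟨v, mem_col.mpr hvc⟩)
  · -- right inverse : encode (decode S) = S
    intro S hS
    funext t
    apply Subtype.ext
    simp only
    rw [col_decodeSeq_in S ⟨a.val + t.val, by omega⟩ ⟨by simp, by simp; omega⟩]
    congr 1
    ext
    simp

-- ncard conversion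
lemma ncard_filter_eq {α : Type*} [Fintype α] (P : α → Prop) :
    {x | P x}.ncard = ((univ : Finset α).filter P).card := by
  rw [Set.ncard_eq_toFinset_card', Set.toFinset_setOf]

noncomputable def key (hn : 0 < n) (C : Finset (Fin m × Fin n)) : Fin n × Fin n :=
  if h : (C.image Prod.snd).Nonempty then
    ((C.image Prod.snd).min' h, (C.image Prod.snd).max' h)
  else (⟨0, hn⟩, ⟨0, hn⟩)

lemma mem_image_snd {C : Finset (Fin m × Fin n)} {j : Fin n} :
    j ∈ C.image Prod.snd ↔ (col C j).Nonempty := by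
  simp only [mem_image]
  constructor
  · rintro ⟨⟨v, c⟩, hp, rfl⟩
    exact ⟨v, mem_col.mpr hp⟩
  · rintro ⟨v, hv⟩
    exact ⟨(v, j), mem_col.mp hv, rfl⟩

lemma key_eq (hn : 0 < n) {C : Finset (Fin m × Fin n)} {a b : Fin n} (hab : a.val ≤ b.val)
    (hpat : ∀ j : Fin n, (col C j).Nonempty ↔ (a.val ≤ j.val ∧ j.val ≤ b.val)) :
    key hn C = (a, b) := by
  have hne : (C.image Prod.snd).Nonempty :=
    ⟨a, mem_image_snd.mpr ((hpat a).mpr ⟨le_refl _, hab⟩)⟩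
  rw [key, dif_pos hne]
  have h1 : (C.image Prod.snd).min' hne = a := by
    apply le_antisymm
    · exact Finset.min'_le _ _ (mem_image_snd.mpr ((hpat a).mpr ⟨le_refl _, hab⟩))
    · apply Finset.le_min'
      intro y hy
      have := (hpat y).mp (mem_image_snd.mp hy)
      exact this.1
  have h2 : (C.image Prod.snd).max' hne = b := by
    apply le_antisymm
    · apply Finset.max'_le
      intro y hy
      have := (hpat y).mp (mem_image_snd.mp hy)
      exact this.2
    · exact Finset.le_max' _ _ (mem_image_snd.mpr ((hpat b).mpr ⟨hab, le_refl _⟩))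
  rw [h1, h2]

lemma fiber_eq (hn : 0 < n) (a b : Fin n) (hab : a.val ≤ b.val) :
    ((univ : Finset (Finset (Fin m × Fin n))).filter (IsCLSet G n)).filter
      (fun C => key hn C = (a, b)) =
    ((univ : Finset (Finset (Fin m × Fin n))).filter (IsCLSet G n)).filter
      (fun C => ∀ j : Fin n, (col C j).Nonempty ↔ (a.val ≤ j.val ∧ j.val ≤ b.val)) := by
  ext C
  simp only [mem_filter, mem_univ, true_and, and_congr_right_iff]
  intro hCL
  constructor
  · intro hkey
    obtain ⟨a₀, b₀, h₀, hpat₀, -, -⟩ := (isCLSet_iff G C).mp hCL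
    have := key_eq hn h₀ hpat₀
    rw [hkey] at this
    obtain ⟨h1, h2⟩ := Prod.mk.injEq .. ▸ this
    exact h1 ▸ h2 ▸ hpat₀
  · intro hpat
    exact key_eq hn hab hpat

lemma fiber_empty (hn : 0 < n) (a b : Fin n) (hab : b.val < a.val) :
    ((univ : Finset (Finset (Fin m × Fin n))).filter (IsCLSet G n)).filter
      (fun C => key hn C = (a, b)) = ∅ := by
  rw [Finset.filter_eq_empty_iff]
  intro C hC
  simp only [mem_filter, mem_univ, true_and] at hC
  obtain ⟨a₀, b₀, h₀, hpat₀, -, -⟩ := (isCLSet_iff G C).mp hC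
  intro hkey
  have := key_eq hn h₀ hpat₀
  rw [hkey] at this
  have e1 : a.val = a₀.val := congrArg (fun p : Fin n × Fin n => (p.1 : Fin n).val) this
  have e2 : b.val = b₀.val := congrArg (fun p : Fin n × Fin n => (p.2 : Fin n).val) this
  omega

end

-- arithmetic identity
lemma sum_tri (F : ℕ → ℕ) {n : ℕ} (hn : 0 < n) :
    (∑ a : Fin n, ∑ b : Fin n, if a.val ≤ b.val then F (b.val - a.val) else 0) =
    n * F 0 + ∑ k ∈ Finset.Icc 2 n, (n - k + 1) * F (k - 1) := by
  have h1 : (∑ a : Fin n, ∑ b : Fin n, if a.val ≤ b.val then F (b.val - a.val) else 0)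
      = ∑ a ∈ Finset.range n, ∑ b ∈ Finset.range n,
          if a ≤ b then F (b - a) else 0 := by
    rw [← Fin.sum_univ_eq_sum_range
      (fun a => ∑ b ∈ Finset.range n, if a ≤ b then F (b - a) else 0) n]
    refine Finset.sum_congr rfl (fun a _ => ?_)
    exact Fin.sum_univ_eq_sum_range (fun b => if a.val ≤ b then F (b - a.val) else 0) n
  rw [h1]
  have h2 : ∀ a ∈ Finset.range n, (∑ b ∈ Finset.range n, if a ≤ b then F (b - a) else 0)
      = ∑ d ∈ Finset.range (n - a), F d := by
    intro a ha
    rw [← Finset.sum_filter]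
    have he : (Finset.range n).filter (fun b => a ≤ b) = Finset.Ico a n := by
      ext b
      simp only [Finset.mem_filter, Finset.mem_range, Finset.mem_Ico]
      omega
    rw [he, Finset.sum_Ico_eq_sum_range]
    refine Finset.sum_congr rfl (fun d _ => ?_)
    congr 1
    omega
  rw [Finset.sum_congr rfl h2]
  have h3 : (∑ a ∈ Finset.range n, ∑ d ∈ Finset.range (n - a), F d)
      = ∑ d ∈ Finset.range n, ∑ a ∈ Finset.range (n - d), F d := by
    apply Finset.sum_comm'
    intro a d
    simp only [Finset.mem_range]
    omega
  rw [h3]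
  have h4 : ∀ d ∈ Finset.range n, (∑ a ∈ Finset.range (n - d), F d) = (n - d) * F d := by
    intro d _
    rw [Finset.sum_const, Finset.card_range, smul_eq_mul]
  rw [Finset.sum_congr rfl h4]
  rw [Finset.range_eq_Ico, Finset.sum_eq_sum_Ico_succ_bot hn]
  congr 1
  · refine Finset.sum_bij' (fun d _ => d + 1) (fun k _ => k - 1) ?_ ?_ ?_ ?_ ?_
    · intro d hd
      simp only [Finset.mem_Ico] at hd
      simp only [Finset.mem_Icc]
      omega
    · intro k hk
      simp only [Finset.mem_Icc] at hk
      simp only [Finset.mem_Ico]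
      omega
    · intro d hd
      omega
    · intro k hk
      simp only [Finset.mem_Icc] at hk
      omega
    · intro d hd
      simp only [Finset.mem_Ico] at hd
      have e1 : d + 1 - 1 = d := by omega
      have e2 : n - (d + 1) + 1 = n - d := by omega
      rw [e1, e2]

/-- For a connected graph `G` of order `m` and `n ≥ 1`,
`N_L(G×P_n) = n·N(G) + Σ_{k=2}^{n} (n−k+1)·(1ᵀ·A^{k−1}·1)` where `A` is the transfer
matrix of `G`. -/
theorem statement1 {m : ℕ} (G : SimpleGraph (Fin m)) (hG : G.Connected)
    (n : ℕ) (hn : 0 < n)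
    (φ : Fin (2 ^ m - 1) ≃ {S : Finset (Fin m) // S.Nonempty})
    (A : Matrix (Fin (2 ^ m - 1)) (Fin (2 ^ m - 1)) ℕ)
    (hA : ∀ i j, A i j =
      if IsConnSet (G □ pathGraph 2)
          ((φ i).1.image (fun p => (p, (0 : Fin 2))) ∪
            (φ j).1.image (fun q => (q, (1 : Fin 2))))
      then 1 else 0) :
    NL G n =
      n * numConnSets G +
        ∑ k ∈ Finset.Icc 2 n, (n - k + 1) * (∑ i, ∑ j, (A ^ (k - 1)) i j) := by
  classical
  set R : {S : Finset (Fin m) // S.Nonempty} → {S : Finset (Fin m) // S.Nonempty} → Prop :=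
    fun S T => pairConn G S.1 T.1 with hR
  have hA' : ∀ i j, A i j = if R (φ i) (φ j) then 1 else 0 := fun i j => hA i j
  have hNL : NL G n = ((univ : Finset (Finset (Fin m × Fin n))).filter (IsCLSet G n)).card :=
    ncard_filter_eq _
  have hNC : numConnSets G = ((univ : Finset (Finset (Fin m))).filter
      (fun S => IsConnSet G S)).card := ncard_filter_eq _
  rw [hNL]
  rw [Finset.card_eq_sum_card_fiberwise (f := key hn) (t := univ) (fun _ _ => mem_univ _)]
  rw [Fintype.sum_prod_type]
  have hterm : ∀ a b : Fin n,
      (((univ : Finset (Finset (Fin m × Fin n))).filter (IsCLSet G n)).filter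
        (fun C => key hn C = (a, b))).card =
      if a.val ≤ b.val then
        (if b.val - a.val = 0 then numConnSets G else (seqSet R (b.val - a.val)).card)
      else 0 := by
    intro a b
    rcases Nat.lt_trichotomy a.val b.val with h | h | h
    · rw [if_pos (le_of_lt h), if_neg (by omega)]
      rw [fiber_eq G hn a b (le_of_lt h)]
      exact fiber_multi G a b h
    · have hab : a = b := Fin.ext h
      subst hab
      rw [if_pos (le_refl _), if_pos (by omega)]
      rw [fiber_eq G hn a a (le_refl _), hNC]
      exact fiber_single G a
    · rw [if_neg (by omega), fiber_empty G hn a b h, Finset.card_empty]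
  rw [Finset.sum_congr rfl (fun a _ => Finset.sum_congr rfl (fun b _ => hterm a b))]
  have h5 : (∑ a : Fin n, ∑ b : Fin n, if a.val ≤ b.val then
      (if b.val - a.val = 0 then numConnSets G else (seqSet R (b.val - a.val)).card) else 0)
      = n * numConnSets G + ∑ k ∈ Finset.Icc 2 n,
        (n - k + 1) * (if k - 1 = 0 then numConnSets G else (seqSet R (k - 1)).card) :=
    sum_tri (fun d => if d = 0 then numConnSets G else (seqSet R d).card) hn
  rw [h5]
  congr 1
  refine Finset.sum_congr rfl (fun k hk => ?_)
  simp only [Finset.mem_Icc] at hk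
  rw [if_neg (by omega), ← tm_total φ R A hA' (k - 1)]
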